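/- Let n = 2m be even and let q be an integer with 1 ≤ q ≤ m. Then the number D(n,q) of bad words in {0,1}^n satisfies D(n,q) = Σ_{y=1−q}^{q−1} Σ_{k=1}^{q−1} (2/q) · (2 cos(πk/(2q)))^{2m} · sin(πk(q−y)/(2q)) · sin(πk(q+y)/(2q)). -/

import Mathlib

open Finset Real

def stepv (b : Bool) : ℤ := if b then -1 else 1

/-- number of confined walks of length `n` from `a` to `b`, strictly inside `(-q,q)` -/
def C (q : ℤ) : ℕ → ℤ → ℤ → ℕ
  | 0, a, b => if a = b ∧ |a| < q then 1 else 0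
  | n+1, a, b => if |a| < q then C q n (a+1) b + C q n (a-1) b else 0

/-- Boolean predicate: the walk determined by `x` starting at `a` stays strictly
inside `(-q,q)` and ends at `b`. -/
def conf (q : ℤ) : (n : ℕ) → ℤ → ℤ → (Fin n → Bool) → Bool
  | 0, a, b, _ => decide (a = b ∧ |a| < q)
  | _+1, a, b, x => decide (|a| < q) && conf q _ (a + stepv (x 0)) b (Fin.tail x)

/-- partial sum of steps -/
def psum {n : ℕ} (x : Fin n → Bool) (j : ℕ) : ℤ :=
  ∑ i ∈ univ.filter (fun i : Fin n => (i : ℕ) < j), stepv (x i)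

lemma psum_eq {n : ℕ} (x : Fin n → Bool) (j : ℕ) :
    psum x j = ∑ i : Fin n, if (i : ℕ) < j then stepv (x i) else 0 := by
  rw [psum, sum_filter]

lemma psum_zero {n : ℕ} (x : Fin n → Bool) : psum x 0 = 0 := by
  simp [psum]

lemma psum_cons {n : ℕ} (c : Bool) (y : Fin n → Bool) (j : ℕ) :
    psum (Fin.cons c y) (j + 1) = stepv c + psum y j := by
  rw [psum_eq, psum_eq, Fin.sum_univ_succ]
  simp only [Fin.val_zero, Nat.zero_lt_succ, if_pos, Fin.cons_zero]
  congr 1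
  · exact Fintype.sum_congr _ _ fun i => by
      have : (Fin.cons c y : Fin (n+1) → Bool) i.succ = y i := @Fin.cons_succ n (fun _ => Bool) c y i
      simp only [Fin.succ] at this ⊢
      rw [this]
      simp only [Nat.add_lt_add_iff_right]

lemma stepv_abs (b : Bool) : |stepv b| = 1 := by cases b <;> simp [stepv]

lemma conf_iff (q : ℤ) (n : ℕ) (a b : ℤ) (x : Fin n → Bool) :
    conf q n a b x = true ↔ (∀ j ≤ n, |a + psum x j| < q) ∧ a + psum x n = b := by
  induction n generalizing a with
  | zero =>
    simp only [conf, decide_eq_true_eq]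
    constructor
    · rintro ⟨h1, h2⟩
      refine ⟨?_, by simp [psum_zero, h1]⟩
      intro j hj
      interval_cases j
      simpa [psum_zero]
    · rintro ⟨h1, h2⟩
      have := h1 0 le_rfl
      rw [psum_zero] at h2 this
      simp at h2
      exact ⟨h2, by simpa using this⟩
  | succ n ih =>
    obtain ⟨c, y, rfl⟩ : ∃ c y, x = Fin.cons c y := ⟨x 0, Fin.tail x, (Fin.cons_self_tail x).symm⟩
    simp only [conf, Bool.and_eq_true, decide_eq_true_eq, Fin.cons_zero, Fin.tail_cons, ih]
    constructor
    · rintro ⟨h0, h1, h2⟩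
      refine ⟨?_, ?_⟩
      · intro j hj
        match j with
        | 0 => simpa [psum_zero]
        | j+1 =>
          rw [psum_cons, ← add_assoc]
          exact h1 j (by omega)
      · rw [psum_cons, ← add_assoc]; exact h2
    · rintro ⟨h1, h2⟩
      refine ⟨by simpa [psum_zero] using h1 0 (by omega), ?_, ?_⟩
      · intro j hj
        have := h1 (j+1) (by omega)
        rwa [psum_cons, ← add_assoc] at this
      · have := h2
        rwa [psum_cons, ← add_assoc] at this

lemma card_conf (q : ℤ) (n : ℕ) (a b : ℤ) :
    Fintype.card {x : Fin n → Bool // conf q n a b x = true} = C q n a b := by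
  induction n generalizing a with
  | zero =>
    rw [Fintype.card_subtype]
    simp only [conf, C]
    by_cases h : a = b ∧ |a| < q
    · obtain ⟨rfl, h2⟩ := h
      simp [h2, Finset.filter_const, Finset.card_univ]
    · simp [h, Finset.filter_const]
  | succ n ih =>
    by_cases h : |a| < q
    · have e : {x : Fin (n+1) → Bool // conf q (n+1) a b x = true} ≃
          (Σ c : Bool, {y : Fin n → Bool // conf q n (a + stepv c) b y = true}) :=
        { toFun := fun x => ⟨x.1 0, Fin.tail x.1, by
            have := x.2
            simp only [conf, Bool.and_eq_true, decide_eq_true_eq] at this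
            exact this.2⟩
          invFun := fun p => ⟨Fin.cons p.1 p.2.1, by
            simp only [conf, Bool.and_eq_true, decide_eq_true_eq, Fin.cons_zero, Fin.tail_cons]
            exact ⟨h, p.2.2⟩⟩
          left_inv := fun x => by
            ext i
            exact congrFun (Fin.cons_self_tail x.1) i
          right_inv := fun p => by
            refine Sigma.ext ?_ ?_
            · simp
            · simp [Fin.tail_cons]; rfl }
      rw [Fintype.card_congr e, Fintype.card_sigma, Fintype.sum_bool]
      have h1 : a + stepv true = a - 1 := by simp [stepv]; ring
      have h2 : a + stepv false = a + 1 := by simp [stepv]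
      rw [h1, h2, ih, ih]
      simp only [C, if_pos h]
      omega
    · have : IsEmpty {x : Fin (n+1) → Bool // conf q (n+1) a b x = true} := by
        constructor
        rintro ⟨x, hx⟩
        simp only [conf, Bool.and_eq_true, decide_eq_true_eq] at hx
        exact h hx.1
      rw [Fintype.card_eq_zero]
      simp [C, h]

open Complex in
lemma cos_sum (Q : ℕ) (hQ : 1 ≤ Q) (d : ℤ) (hd : ¬ ((2*(Q:ℤ)) ∣ d)) :
    ∑ k ∈ Finset.Icc 1 (Q-1), Real.cos (π * k * (d:ℝ) / Q) =
      if Even d then (-1 : ℝ) else 0 := by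
  have hQ0 : (Q:ℝ) ≠ 0 := Nat.cast_ne_zero.mpr (by omega)
  have hQ0' : (Q:ℂ) ≠ 0 := Nat.cast_ne_zero.mpr (by omega)
  set θ : ℝ := π * d / Q with hθ
  set z : ℂ := Complex.exp (θ * I) with hz
  have hzk : ∀ k : ℕ, z ^ k = Complex.exp ((π * k * (d:ℝ) / Q : ℝ) * I) := by
    intro k
    rw [hz, ← Complex.exp_nat_mul]
    congr 1
    rw [hθ]
    push_cast
    ring
  have hcos : ∀ k : ℕ, Real.cos (π * k * (d:ℝ) / Q) = (z ^ k).re := by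
    intro k; rw [hzk k, Complex.exp_ofReal_mul_I_re]
  have hz1 : z ≠ 1 := by
    intro h
    rw [hz, Complex.exp_eq_one_iff] at h
    obtain ⟨n, hn⟩ := h
    have h2 : ((θ:ℂ)) = (n:ℂ) * (2*(π:ℂ)) := by
      have : ((θ:ℂ)) * I = ((n:ℂ) * (2*(π:ℂ))) * I := by rw [hn]; ring
      exact mul_right_cancel₀ Complex.I_ne_zero this
    have h3 : θ = (n:ℝ) * (2*π) := by
      exact_mod_cast h2
    rw [hθ] at h3
    have h4 : (d:ℝ) = 2*(n:ℝ)*Q := by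
      field_simp at h3
      have := mul_left_cancel₀ Real.pi_ne_zero
        (show π * (d:ℝ) = π * (2*(n:ℝ)*Q) by rw [h3]; ring)
      linarith [this]
    have h5 : d = 2*n*Q := by exact_mod_cast h4
    exact hd ⟨n, by linarith [h5]⟩
  have hgeom : ∑ k ∈ Finset.range Q, z ^ k = (z ^ Q - 1) / (z - 1) := geom_sum_eq hz1 Q
  have hsplit : ∑ k ∈ Finset.Icc 1 (Q-1), Real.cos (π * k * (d:ℝ) / Q)
      = (∑ k ∈ Finset.range Q, z^k).re - 1 := by
    rw [Complex.re_sum]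
    have hins : Finset.range Q = insert 0 (Finset.Icc 1 (Q-1)) := by
      ext k; simp [Finset.mem_Icc, Finset.mem_range]; omega
    rw [hins, Finset.sum_insert (by simp)]
    simp only [pow_zero, Complex.one_re]
    rw [Finset.sum_congr rfl fun k _ => (hcos k)]
    ring
  have hzQexp : z ^ Q = Complex.exp (((π * (d:ℝ) : ℝ):ℂ) * I) := by
    rw [hz, ← Complex.exp_nat_mul]
    congr 1
    rw [hθ]
    push_cast
    field_simp
  rcases Int.even_or_odd d with ⟨e, he⟩ | ⟨e, he⟩
  · have hzQ : z ^ Q = 1 := by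
      rw [hzQexp, show (((π * (d:ℝ) : ℝ):ℂ)) * I = (e:ℂ) * (2*(π:ℂ)*I) by push_cast [he]; ring,
        Complex.exp_int_mul_two_pi_mul_I]
    rw [hsplit, hgeom, hzQ, sub_self, zero_div]
    have hEv : Even d := ⟨e, he⟩
    simp only [Complex.zero_re, if_pos hEv]
    norm_num
  · have hzQ : z ^ Q = -1 := by
      rw [hzQexp, show (((π * (d:ℝ) : ℝ):ℂ)) * I = (e:ℂ) * (2*(π:ℂ)*I) + (π:ℂ)*I by push_cast [he]; ring,
        Complex.exp_add, Complex.exp_int_mul_two_pi_mul_I, Complex.exp_pi_mul_I, one_mul]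
    have habs : ‖z‖ = 1 := Complex.norm_exp_ofReal_mul_I θ
    have hsq : z.re^2 + z.im^2 = 1 := by
      have h := Complex.sq_norm z
      rw [habs] at h
      rw [Complex.normSq_apply] at h
      nlinarith [h]
    have hre1 : z.re ≠ 1 := by
      intro h
      apply hz1
      have him : z.im = 0 := by nlinarith
      exact Complex.ext (by simp [h]) (by simp [him])
    have hne : (2 : ℝ) - 2*z.re ≠ 0 := by
      intro h
      exact hre1 (by linarith)
    have hnormSq : Complex.normSq (z - 1) = 2 - 2*z.re := by
      rw [Complex.normSq_apply, Complex.sub_re, Complex.sub_im, Complex.one_re, Complex.one_im]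
      nlinarith [hsq]
    have hre2 : ((z^Q - 1)/(z-1)).re = 1 := by
      rw [hzQ, Complex.div_re, hnormSq]
      have h1 : ((-1 : ℂ) - 1).re = -2 := by norm_num
      have h2 : ((-1 : ℂ) - 1).im = 0 := by simp
      rw [h1, h2, Complex.sub_re, Complex.sub_im, Complex.one_re, Complex.one_im]
      field_simp
      ring
    rw [hsplit, hgeom, hre2]
    have hod : ¬ Even d := by
      rintro ⟨f, hf⟩
      omega
    rw [if_neg hod]
    ring

lemma no_mult {Q : ℕ} (hQ : 1 ≤ Q) {d : ℤ} (hne : d ≠ 0) (habs : |d| < 2*(Q:ℤ)) :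
    ¬ ((2*(Q:ℤ)) ∣ d) := by
  rintro ⟨c, hc⟩
  rw [abs_lt] at habs
  rcases lt_trichotomy c 0 with h|h|h
  · have h1 : c ≤ -1 := by omega
    have h2 : 2*(Q:ℤ)*c ≤ 2*(Q:ℤ)*(-1) :=
      mul_le_mul_of_nonneg_left h1 (by positivity)
    omega
  · rw [h, mul_zero] at hc; omega
  · have h1 : (1:ℤ) ≤ c := by omega
    have h2 : 2*(Q:ℤ)*1 ≤ 2*(Q:ℤ)*c :=
      mul_le_mul_of_nonneg_left h1 (by positivity)
    omega

lemma sin_orth (Q : ℕ) (hQ : 1 ≤ Q) (u v : ℤ) (hu0 : 0 < u) (huQ : u < Q)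
    (hv0 : 0 < v) (hvQ : v < Q) :
    ∑ k ∈ Finset.Icc 1 (Q-1), Real.sin (π * k * (u:ℝ) / Q) * Real.sin (π * k * (v:ℝ) / Q) =
      if u = v then (Q:ℝ)/2 else 0 := by
  have key : ∀ k : ℕ, Real.sin (π * k * (u:ℝ) / Q) * Real.sin (π * k * (v:ℝ) / Q)
      = (Real.cos (π * k * (((u - v : ℤ)):ℝ) / Q) - Real.cos (π * k * (((u + v : ℤ)):ℝ) / Q))/2 := by
    intro k
    push_cast
    rw [show π * k * ((u:ℝ) - v) / Q = π*k*(u:ℝ)/Q - π*k*(v:ℝ)/Q by ring,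
        show π * k * ((u:ℝ) + v) / Q = π*k*(u:ℝ)/Q + π*k*(v:ℝ)/Q by ring,
        Real.cos_sub, Real.cos_add]
    ring
  rw [Finset.sum_congr rfl fun k _ => key k, ← Finset.sum_div, Finset.sum_sub_distrib]
  have hB : ∑ k ∈ Finset.Icc 1 (Q-1), Real.cos (π * k * (((u + v : ℤ)):ℝ) / Q)
      = if Even (u + v) then (-1:ℝ) else 0 := by
    exact cos_sum Q hQ _ (no_mult hQ (by omega) (by rw [abs_lt]; omega))
  by_cases huv : u = v
  · subst huv
    have hA : ∑ k ∈ Finset.Icc 1 (Q-1), Real.cos (π * k * (((u - u : ℤ)):ℝ) / Q) = (Q:ℝ) - 1 := by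
      have : ∀ k : ℕ, Real.cos (π * k * (((u - u : ℤ)):ℝ) / Q) = 1 := by
        intro k
        rw [sub_self]
        push_cast
        simp
      rw [Finset.sum_congr rfl fun k _ => this k, Finset.sum_const, Nat.card_Icc]
      have : Q - 1 + 1 - 1 = Q - 1 := by omega
      rw [this, nsmul_eq_mul, mul_one, Nat.cast_sub hQ, Nat.cast_one]
    rw [hA, hB, if_pos rfl, if_pos (by exact ⟨u, by ring⟩ : Even (u + u))]
    ring
  · have hA : ∑ k ∈ Finset.Icc 1 (Q-1), Real.cos (π * k * (((u - v : ℤ)):ℝ) / Q)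
        = if Even (u - v) then (-1:ℝ) else 0 := by
      exact cos_sum Q hQ _ (no_mult hQ (by omega) (by rw [abs_lt]; omega))
    rw [hA, hB, if_neg huv]
    have hpar : Even (u - v) ↔ Even (u + v) := by
      constructor <;> rintro ⟨c, hc⟩
      · exact ⟨c + v, by omega⟩
      · exact ⟨c - v, by omega⟩
    by_cases he : Even (u - v)
    · rw [if_pos he, if_pos (hpar.1 he)]; ring
    · rw [if_neg he, if_neg (fun h => he (hpar.2 h))]; ring

lemma abs_eq_q {a : ℤ} {q : ℕ} (h1 : |a| ≤ q) (h2 : ¬ |a| < q) : a = q ∨ a = -(q:ℤ) := by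
  rcases abs_le.mp h1 with ⟨hl, hr⟩
  rw [abs_lt] at h2
  omega

lemma C_spectral (q : ℕ) (hq : 1 ≤ q) (n : ℕ) (a b : ℤ) (ha : |a| ≤ (q:ℤ)) (hb : |b| < (q:ℤ)) :
    (C (q:ℤ) n a b : ℝ) = ∑ k ∈ Finset.Icc 1 (2*q-1),
      (1/(q:ℝ)) * (2 * Real.cos (π * k / (2*(q:ℝ))))^n
        * Real.sin (π * k * ((a:ℝ) + q) / (2*(q:ℝ))) * Real.sin (π * k * ((b:ℝ) + q) / (2*(q:ℝ))) := by
  have hq0 : (q:ℝ) ≠ 0 := Nat.cast_ne_zero.mpr (by omega)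
  induction n generalizing a with
  | zero =>
    by_cases ha' : |a| < (q:ℤ)
    · have horth := sin_orth (2*q) (by omega) (a + q) (b + q)
        (by rw [abs_lt] at ha'; omega) (by rw [abs_lt] at ha'; push_cast; omega)
        (by rw [abs_lt] at hb; omega) (by rw [abs_lt] at hb; push_cast; omega)
      have hcg : ∀ k : ℕ, (1/(q:ℝ)) * (2 * Real.cos (π * k / (2*(q:ℝ))))^0
          * Real.sin (π * k * ((a:ℝ) + q) / (2*(q:ℝ))) * Real.sin (π * k * ((b:ℝ) + q) / (2*(q:ℝ)))
          = (1/(q:ℝ)) * (Real.sin (π * k * (((a + q : ℤ)):ℝ) / ((2*q : ℕ):ℝ)) * Real.sin (π * k * (((b + q : ℤ)):ℝ) / ((2*q : ℕ):ℝ))) := by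
        intro k
        push_cast
        ring
      rw [Finset.sum_congr rfl fun k _ => hcg k, ← Finset.mul_sum, horth]
      by_cases hab : a = b
      · rw [if_pos (by omega : a + q = b + q)]
        rw [show (C (q:ℤ) 0 a b : ℝ) = 1 by rw [C, if_pos ⟨hab, ha'⟩]; norm_num]
        push_cast
        field_simp
      · rw [if_neg (by omega : ¬ (a + q = b + q))]
        rw [show (C (q:ℤ) 0 a b : ℝ) = 0 by rw [C, if_neg (fun h => hab h.1)]; norm_num]
        ring
    · have hC : (C (q:ℤ) 0 a b : ℝ) = 0 := by
        rw [C, if_neg (fun h => ha' h.2)]; norm_num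
      rw [hC]
      symm
      apply Finset.sum_eq_zero
      intro k _
      rcases abs_eq_q ha ha' with rfl | rfl
      · have : Real.sin (π * k * (((q:ℤ):ℝ) + q) / (2*(q:ℝ))) = 0 := by
          rw [show π * k * (((q:ℤ):ℝ) + q) / (2*(q:ℝ)) = (k:ℝ) * π by push_cast; field_simp; ring]
          exact Real.sin_nat_mul_pi k
        rw [this]
        ring
      · push_cast
        rw [show π * (k:ℝ) * (-(q:ℝ) + q) / (2*(q:ℝ)) = 0 by ring, Real.sin_zero]
        ring
  | succ n ih =>
    by_cases ha' : |a| < (q:ℤ)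
    · have h1 : |a + 1| ≤ (q:ℤ) := by rw [abs_le]; rw [abs_lt] at ha'; omega
      have h2 : |a - 1| ≤ (q:ℤ) := by rw [abs_le]; rw [abs_lt] at ha'; omega
      have hCs : (C (q:ℤ) (n+1) a b : ℝ) = (C (q:ℤ) n (a+1) b : ℝ) + (C (q:ℤ) n (a-1) b : ℝ) := by
        rw [C, if_pos ha']
        push_cast
        ring
      rw [hCs, ih (a+1) h1, ih (a-1) h2, ← Finset.sum_add_distrib]
      apply Finset.sum_congr rfl
      intro k _
      have trig : 2 * Real.cos (π * k / (2*(q:ℝ))) * Real.sin (π * k * ((a:ℝ) + q) / (2*(q:ℝ)))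
          = Real.sin (π * k * (((a:ℝ) + 1) + q) / (2*(q:ℝ))) + Real.sin (π * k * (((a:ℝ) - 1) + q) / (2*(q:ℝ))) := by
        rw [show π * k * (((a:ℝ) + 1) + q) / (2*(q:ℝ)) = π * k * ((a:ℝ) + q) / (2*(q:ℝ)) + π * k / (2*(q:ℝ)) by ring,
            show π * k * (((a:ℝ) - 1) + q) / (2*(q:ℝ)) = π * k * ((a:ℝ) + q) / (2*(q:ℝ)) - π * k / (2*(q:ℝ)) by ring,
            Real.sin_add, Real.sin_sub]
        ring
      have e1 : (((a + 1 : ℤ)):ℝ) = (a:ℝ) + 1 := by push_cast; ring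
      have e2 : (((a - 1 : ℤ)):ℝ) = (a:ℝ) - 1 := by push_cast; ring
      rw [e1, e2, pow_succ]
      linear_combination (-(1/(q:ℝ)) * (2 * Real.cos (π * k / (2*(q:ℝ))))^n
        * Real.sin (π * k * ((b:ℝ) + q) / (2*(q:ℝ)))) * trig
    · have hC : (C (q:ℤ) (n+1) a b : ℝ) = 0 := by rw [C, if_neg ha']; norm_num
      rw [hC]
      symm
      apply Finset.sum_eq_zero
      intro k _
      rcases abs_eq_q ha ha' with rfl | rfl
      · have : Real.sin (π * k * (((q:ℤ):ℝ) + q) / (2*(q:ℝ))) = 0 := by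
          rw [show π * k * (((q:ℤ):ℝ) + q) / (2*(q:ℝ)) = (k:ℝ) * π by push_cast; field_simp; ring]
          exact Real.sin_nat_mul_pi k
        rw [this]
        ring
      · push_cast
        rw [show π * (k:ℝ) * (-(q:ℝ) + q) / (2*(q:ℝ)) = 0 by ring, Real.sin_zero]
        ring

/-- The Hamming weight of a binary word `x ∈ {0,1}^N`: the number of ones. -/
def wt {N : ℕ} (x : Fin N → Bool) : ℕ :=
  (Finset.univ.filter (fun i => x i = true)).card

/-- `Flip x j` complements the first `j` bits of `x`. -/
def Flip {N : ℕ} (x : Fin N → Bool) (j : ℕ) : Fin N → Bool :=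
  fun i => if (i : ℕ) < j then !(x i) else x i

/-- `x ∈ {0,1}^{2m}` is bad if `T(x,q) = ∅` and `T(x̄,q) = ∅`. -/
def Bad (m q : ℕ) (x : Fin (2*m) → Bool) : Prop :=
  (∀ j ≤ 2*m, wt (Flip x j) ≠ m + q) ∧
  (∀ j ≤ 2*m, wt (Flip (fun i => !(x i)) j) ≠ m + q)

/-- `D m q` is the number of bad words in `{0,1}^{2m}`. -/
noncomputable def D (m q : ℕ) : ℕ := Nat.card {x : Fin (2*m) → Bool // Bad m q x}

lemma wt_cast {N : ℕ} (y : Fin N → Bool) :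
    (wt y : ℤ) = ∑ i : Fin N, (if y i = true then (1:ℤ) else 0) := by
  rw [wt, Finset.card_filter]
  push_cast
  rfl

lemma wt_flip {n : ℕ} (x : Fin n → Bool) (j : ℕ) :
    (wt (Flip x j) : ℤ) = wt x + psum x j := by
  rw [wt_cast, wt_cast, psum_eq, ← Finset.sum_add_distrib]
  apply Finset.sum_congr rfl
  intro i _
  by_cases hij : (i:ℕ) < j <;> cases hxi : x i <;> simp [Flip, hij, hxi, stepv]

lemma wt_flip_compl {n : ℕ} (x : Fin n → Bool) (j : ℕ) :
    (wt (Flip (fun i => !(x i)) j) : ℤ) = n - wt x - psum x j := by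
  rw [wt_cast, wt_cast, psum_eq]
  have hn : (n : ℤ) = ∑ _i : Fin n, (1:ℤ) := by simp
  rw [hn, ← Finset.sum_sub_distrib, ← Finset.sum_sub_distrib]
  apply Finset.sum_congr rfl
  intro i _
  by_cases hij : (i:ℕ) < j <;> cases hxi : x i <;> simp [Flip, hij, hxi, stepv]

lemma psum_total {n : ℕ} (x : Fin n → Bool) :
    psum x n = n - 2 * wt x := by
  rw [psum_eq, wt_cast]
  have hn : (n : ℤ) = ∑ _i : Fin n, (1:ℤ) := by simp
  rw [hn, Finset.mul_sum, ← Finset.sum_sub_distrib]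
  apply Finset.sum_congr rfl
  intro i _
  cases hxi : x i <;> simp [i.isLt, hxi, stepv]

lemma psum_step {n : ℕ} (x : Fin n → Bool) (j : ℕ) :
    |psum x (j+1) - psum x j| ≤ 1 := by
  rw [psum_eq, psum_eq, ← Finset.sum_sub_distrib]
  have hpt : ∀ i : Fin n, ((if (i:ℕ) < j+1 then stepv (x i) else 0)
      - (if (i:ℕ) < j then stepv (x i) else 0)) = if (i:ℕ) = j then stepv (x i) else 0 := by
    intro i
    rcases Nat.lt_trichotomy (i:ℕ) j with h|h|h
    · rw [if_pos (by omega : (i:ℕ) < j+1), if_pos h, if_neg (by omega : ¬(i:ℕ) = j), sub_self]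
    · rw [if_pos (by omega : (i:ℕ) < j+1), if_neg (by omega : ¬(i:ℕ) < j), if_pos h, sub_zero]
    · rw [if_neg (by omega : ¬(i:ℕ) < j+1), if_neg (by omega : ¬(i:ℕ) < j), if_neg (by omega : ¬(i:ℕ) = j), sub_self]
  rw [Finset.sum_congr rfl fun i _ => hpt i]
  by_cases hj : j < n
  · rw [Finset.sum_eq_single (⟨j, hj⟩ : Fin n)
      (fun i _ hne => by simp [show ¬((i:ℕ) = j) from fun h => hne (Fin.ext h)])
      (by simp)]
    rw [if_pos rfl]
    exact le_of_eq (stepv_abs _)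
  · rw [Finset.sum_eq_zero (fun i _ => by
      simp [show ¬((i:ℕ) = j) from fun h => hj (h ▸ i.isLt)])]
    simp

lemma ivt (f : ℕ → ℤ) (hf : ∀ j, |f (j+1) - f j| ≤ 1) (c : ℤ) (n : ℕ)
    (h0 : f 0 ≤ c) (h1 : c ≤ f n) : ∃ j ≤ n, f j = c := by
  induction n with
  | zero => exact ⟨0, le_rfl, le_antisymm h0 h1⟩
  | succ n ih =>
    by_cases h : c ≤ f n
    · obtain ⟨j, hj, hj2⟩ := ih h
      exact ⟨j, by omega, hj2⟩
    · push_neg at h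
      have := hf n
      rw [abs_le] at this
      exact ⟨n+1, le_rfl, by omega⟩

lemma bad_iff (m q : ℕ) (hq1 : 1 ≤ q) (x : Fin (2*m) → Bool) :
    Bad m q x ↔ conf (q:ℤ) (2*m) (-((m:ℤ) - wt x)) ((m:ℤ) - wt x) x = true := by
  set a : ℤ := (m:ℤ) - wt x with ha
  rw [conf_iff]
  have hend : -a + psum x (2*m) = a := by
    rw [psum_total]; push_cast; omega
  have key : ∀ j, (wt (Flip x j) ≠ m + q ∧ wt (Flip (fun i => !(x i)) j) ≠ m + q) ↔
      (-a + psum x j ≠ (q:ℤ) ∧ -a + psum x j ≠ -(q:ℤ)) := by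
    intro j
    have h1 := wt_flip x j
    have h2 := wt_flip_compl x j
    omega
  have hBad : Bad m q x ↔ ∀ j ≤ 2*m, (-a + psum x j ≠ (q:ℤ) ∧ -a + psum x j ≠ -(q:ℤ)) := by
    rw [Bad, ← forall_and]
    constructor
    · intro h j hj
      exact (key j).1 ⟨(h j).1 hj, (h j).2 hj⟩
    · intro h j
      exact ⟨fun hj => ((key j).2 (h j hj)).1, fun hj => ((key j).2 (h j hj)).2⟩
  rw [hBad]
  constructor
  · intro h
    refine ⟨?_, hend⟩
    have h0 : |a| < (q:ℤ) := by
      by_contra hc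
      push_neg at hc
      have hstep : ∀ j, |(-a + psum x (j+1)) - (-a + psum x j)| ≤ 1 := by
        intro j
        have := psum_step x j
        have e : (-a + psum x (j+1)) - (-a + psum x j) = psum x (j+1) - psum x j := by ring
        rw [e]; exact this
      rcases le_abs.mp hc with hc1 | hc1
      · -- q ≤ a
        obtain ⟨j, hj, hjc⟩ := ivt (fun j => -a + psum x j) hstep (q:ℤ) (2*m)
          (by show -a + psum x 0 ≤ (q:ℤ); rw [psum_zero]; omega)
          (by show (q:ℤ) ≤ -a + psum x (2*m); rw [hend]; omega)
        exact (h j hj).1 hjc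
      · -- q ≤ -a
        obtain ⟨j, hj, hjc⟩ := ivt (fun j => -(-a + psum x j)) (fun j => by
          have := psum_step x j
          have e : -(-a + psum x (j+1)) - -(-a + psum x j) = -(psum x (j+1) - psum x j) := by ring
          rw [e, abs_neg]; exact this) (q:ℤ) (2*m)
          (by show -(-a + psum x 0) ≤ (q:ℤ); rw [psum_zero]; omega)
          (by show (q:ℤ) ≤ -(-a + psum x (2*m)); rw [hend]; omega)
        have hjc' : -(-a + psum x j) = (q:ℤ) := hjc
        exact (h j hj).2 (by omega)
    intro j hj
    induction j with
    | zero => rw [psum_zero]; simpa using h0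
    | succ j ih =>
      have hij := ih (by omega)
      have hs := psum_step x j
      have hne := h (j+1) hj
      rw [abs_le] at hs
      rw [abs_lt] at hij ⊢
      omega
  · rintro ⟨h, -⟩ j hj
    have := h j hj
    rw [abs_lt] at this
    omega

lemma D_eq (m q : ℕ) (hq1 : 1 ≤ q) :
    D m q = ∑ y ∈ Finset.Icc (1 - (q:ℤ)) ((q:ℤ) - 1), C (q:ℤ) (2*m) (-y) y := by
  classical
  rw [D, Nat.card_eq_fintype_card, Fintype.card_subtype]
  have H : ∀ x ∈ Finset.univ.filter (fun x : Fin (2*m) → Bool => Bad m q x),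
      ((m:ℤ) - wt x) ∈ Finset.Icc (1 - (q:ℤ)) ((q:ℤ) - 1) := by
    intro x hx
    rw [Finset.mem_filter] at hx
    have hb := (bad_iff m q hq1 x).1 hx.2
    have h0 := ((conf_iff _ _ _ _ _).1 hb).1 0 (by omega)
    rw [psum_zero, add_zero, abs_lt] at h0
    rw [Finset.mem_Icc]
    omega
  rw [Finset.card_eq_sum_card_fiberwise H]
  apply Finset.sum_congr rfl
  intro y hy
  rw [← card_conf (q:ℤ) (2*m) (-y) y, Fintype.card_subtype]
  congr 1
  ext x
  simp only [Finset.filter_filter, Finset.mem_filter, Finset.mem_univ, true_and]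
  constructor
  · rintro ⟨hb, hy'⟩
    rw [bad_iff m q hq1 x] at hb
    rwa [hy'] at hb
  · intro hc
    have hy2 : (m:ℤ) - wt x = y := by
      have h2 := ((conf_iff _ _ _ _ _).1 hc).2
      rw [psum_total] at h2
      push_cast at h2
      omega
    exact ⟨by rw [bad_iff m q hq1 x, hy2]; exact hc, hy2⟩

lemma fold (q m : ℕ) (hq : 1 ≤ q) (hm : 1 ≤ m) (u v : ℤ) (huv : u + v = 2*(q:ℤ)) :
    ∑ k ∈ Finset.Icc 1 (2*q-1), (1/(q:ℝ)) * (2 * Real.cos (π * k / (2*(q:ℝ))))^(2*m)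
        * Real.sin (π * k * (u:ℝ) / (2*(q:ℝ))) * Real.sin (π * k * (v:ℝ) / (2*(q:ℝ)))
    = ∑ k ∈ Finset.Icc 1 (q-1), (2/(q:ℝ)) * (2 * Real.cos (π * k / (2*(q:ℝ))))^(2*m)
        * Real.sin (π * k * (u:ℝ) / (2*(q:ℝ))) * Real.sin (π * k * (v:ℝ) / (2*(q:ℝ))) := by
  have hq0 : (q:ℝ) ≠ 0 := Nat.cast_ne_zero.mpr (by omega)
  set g : ℕ → ℝ := fun k => (1/(q:ℝ)) * (2 * Real.cos (π * k / (2*(q:ℝ))))^(2*m)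
      * Real.sin (π * k * (u:ℝ) / (2*(q:ℝ))) * Real.sin (π * k * (v:ℝ) / (2*(q:ℝ))) with hg
  have hsym : ∀ k ∈ Finset.Ioc q (2*q-1), g k = g (2*q - k) := by
    intro k hk
    rw [Finset.mem_Ioc] at hk
    have hk2 : k ≤ 2*q := by omega
    have hcast : ((2*q - k : ℕ):ℝ) = 2*(q:ℝ) - k := by
      push_cast [hk2]; ring
    have hc1 : Real.cos (π * ((2*q - k : ℕ):ℝ) / (2*(q:ℝ))) = -Real.cos (π * k / (2*(q:ℝ))) := by
      rw [hcast, show π * (2*(q:ℝ) - (k:ℝ)) / (2*(q:ℝ)) = π - π * k / (2*(q:ℝ)) by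
        field_simp]
      exact Real.cos_pi_sub _
    have hv1 : Real.sin (π * ((2*q - k : ℕ):ℝ) * (u:ℝ) / (2*(q:ℝ)))
        = -(((-1:ℝ))^u * Real.sin (π * k * (u:ℝ) / (2*(q:ℝ)))) := by
      rw [hcast, show π * (2*(q:ℝ) - (k:ℝ)) * (u:ℝ) / (2*(q:ℝ))
          = (u:ℝ) * π - π * (k:ℝ) * (u:ℝ) / (2*(q:ℝ)) by field_simp]
      exact Real.sin_int_mul_pi_sub _ u
    have hv2 : Real.sin (π * ((2*q - k : ℕ):ℝ) * (v:ℝ) / (2*(q:ℝ)))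
        = -(((-1:ℝ))^v * Real.sin (π * k * (v:ℝ) / (2*(q:ℝ)))) := by
      rw [hcast, show π * (2*(q:ℝ) - (k:ℝ)) * (v:ℝ) / (2*(q:ℝ))
          = (v:ℝ) * π - π * (k:ℝ) * (v:ℝ) / (2*(q:ℝ)) by field_simp]
      exact Real.sin_int_mul_pi_sub _ v
    have hpow : ((-1:ℝ))^u * ((-1:ℝ))^v = 1 := by
      rw [← zpow_add₀ (by norm_num : (-1:ℝ) ≠ 0), huv,
        show (2*(q:ℤ)) = ((2*q : ℕ) : ℤ) by push_cast; ring, zpow_natCast]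
      exact Even.neg_one_pow ⟨q, by ring⟩
    rw [hg]
    simp only []
    rw [hc1, hv1, hv2]
    have hp : (2 * -Real.cos (π * (k:ℝ) / (2*(q:ℝ))))^(2*m)
        = (2 * Real.cos (π * (k:ℝ) / (2*(q:ℝ))))^(2*m) := by
      rw [show (2:ℝ) * -Real.cos (π * (k:ℝ) / (2*(q:ℝ)))
          = -(2 * Real.cos (π * (k:ℝ) / (2*(q:ℝ)))) by ring,
        Even.neg_pow ⟨m, by ring⟩]
    rw [hp]
    linear_combination (-(1/(q:ℝ)) * (2 * Real.cos (π * (k:ℝ) / (2*(q:ℝ))))^(2*m)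
      * Real.sin (π * (k:ℝ) * (u:ℝ) / (2*(q:ℝ)))
      * Real.sin (π * (k:ℝ) * (v:ℝ) / (2*(q:ℝ)))) * hpow
  have hgq : g q = 0 := by
    rw [hg]
    simp only []
    rw [show π * (q:ℝ) / (2*(q:ℝ)) = π/2 by field_simp, Real.cos_pi_div_two,
      mul_zero, zero_pow (by omega : 2*m ≠ 0)]
    ring
  have hIcc1 : Finset.Icc 1 (2*q-1) = Finset.Ioc 0 (2*q-1) := by
    ext j; simp [Finset.mem_Icc, Finset.mem_Ioc]; omega
  have hIcc2 : Finset.Icc 1 (q-1) = Finset.Ioc 0 (q-1) := by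
    ext j; simp [Finset.mem_Icc, Finset.mem_Ioc]; omega
  have h1 : (∑ k ∈ Finset.Ioc 0 (q-1), g k) + (∑ k ∈ Finset.Ioc (q-1) (2*q-1), g k)
      = ∑ k ∈ Finset.Ioc 0 (2*q-1), g k :=
    Finset.sum_Ioc_consecutive g (by omega) (by omega)
  have h2 : (∑ k ∈ Finset.Ioc (q-1) q, g k) + (∑ k ∈ Finset.Ioc q (2*q-1), g k)
      = ∑ k ∈ Finset.Ioc (q-1) (2*q-1), g k :=
    Finset.sum_Ioc_consecutive g (by omega) (by omega)
  have h3 : (∑ k ∈ Finset.Ioc (q-1) q, g k) = g q := by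
    rw [show Finset.Ioc (q-1) q = {q} by ext j; simp [Finset.mem_Ioc]; omega,
      Finset.sum_singleton]
  have h4 : (∑ k ∈ Finset.Ioc q (2*q-1), g k) = ∑ k ∈ Finset.Ioc 0 (q-1), g k := by
    apply Finset.sum_nbij' (i := fun k => 2*q - k) (j := fun k => 2*q - k)
    · intro a ha; rw [Finset.mem_Ioc] at *; omega
    · intro a ha; rw [Finset.mem_Ioc] at *; omega
    · intro a ha; rw [Finset.mem_Ioc] at ha; omega
    · intro a ha; rw [Finset.mem_Ioc] at ha; omega
    · intro a ha; exact hsym a ha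
  rw [hIcc1, hIcc2, ← h1, ← h2, h3, h4, hgq, zero_add, ← Finset.sum_add_distrib]
  apply Finset.sum_congr rfl
  intro k _
  rw [hg]
  simp only []
  ring

/-- exact trigonometric formula for the number of bad words. -/
theorem stmt2 (m q : ℕ) (hq1 : 1 ≤ q) (hqm : q ≤ m) :
    (D m q : ℝ) =
      ∑ y ∈ Finset.Icc (1 - (q : ℤ)) ((q : ℤ) - 1), ∑ k ∈ Finset.Icc 1 (q - 1),
        (2 / (q : ℝ)) * (2 * Real.cos (Real.pi * (k : ℝ) / (2*q)))^(2*m)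
          * Real.sin (Real.pi * (k : ℝ) * ((q : ℝ) - (y : ℝ)) / (2*q))
          * Real.sin (Real.pi * (k : ℝ) * ((q : ℝ) + (y : ℝ)) / (2*q)) := by
  have hm1 : 1 ≤ m := le_trans hq1 hqm
  rw [D_eq m q hq1, Nat.cast_sum]
  apply Finset.sum_congr rfl
  intro y hy
  rw [Finset.mem_Icc] at hy
  have hy1 : |(-y)| ≤ (q:ℤ) := by rw [abs_le]; omega
  have hy2 : |y| < (q:ℤ) := by rw [abs_lt]; omega
  rw [C_spectral q hq1 (2*m) (-y) y hy1 hy2]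
  have e1 : ((-y : ℤ):ℝ) + ((q:ℕ):ℝ) = ((((q:ℤ) - y : ℤ)):ℝ) := by push_cast; ring
  have e2 : ((y : ℤ):ℝ) + ((q:ℕ):ℝ) = ((((q:ℤ) + y : ℤ)):ℝ) := by push_cast; ring
  simp only [e1, e2]
  rw [fold q m hq1 hm1 ((q:ℤ) - y) ((q:ℤ) + y) (by ring)]
  apply Finset.sum_congr rfl
  intro k _
  push_cast
  ring
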